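/- arXiv:1310.1048 — 10 statements merged into one kernel-verified Lean document; each statement's English description precedes it below -/
import Mathlib

section
/- For all n ≥ 0, p_{n+1}(x) = x·p_n(x) − Σ_{i=0}^{n} p_i(x). -/
open Real Finset

noncomputable def p : ℕ → ℝ → ℝ
  | 0, x => x
  | 1, x => x * (x - 1)
  | (n+2), x => x * (p (n+1) x - p n x)

theorem stmt_0 (n : ℕ) (x : ℝ) :
    p (n+1) x = x * p n x - ∑ i ∈ Finset.range (n+1), p i x := by
  induction n with
  | zero => simp [p]; ring
  | succ k ih =>
    rw [Finset.sum_range_succ, show p (k+2) x = x * (p (k+1) x - p k x) from rfl]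
    have : ∑ i ∈ Finset.range (k+1), p i x = x * p k x - p (k+1) x := by
      linarith [ih]
    rw [this]; ring
end

section
/- For all n ≥ 0, p_n(x) = x^⌊(n+1)/2⌋ · Π_{k=1}^{⌊(n+2)/2⌋} (x − 4cos²(kπ/(n+2))). -/
open Real Finset

open Polynomial in
noncomputable def P : ℕ → Polynomial ℝ
  | 0 => X
  | 1 => X * (X - 1)
  | (n+2) => X * (P (n+1) - P n)

section Aux
open Polynomial


lemma p_eval : ∀ (n : ℕ) (x : ℝ), p n x = (P n).eval x := by
  intro n
  induction n using Nat.twoStepInduction with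
  | zero => intro x; simp [p, P]
  | one => intro x; simp [p, P]
  | more n ih1 ih2 => intro x; simp [p, P, ih1 x, ih2 x]

lemma key (n : ℕ) (θ : ℝ) :
    p n (4 * Real.cos θ ^ 2) * Real.sin θ = (2 * Real.cos θ) ^ (n+1) * Real.sin ((n+2) * θ) := by
  induction n using Nat.twoStepInduction generalizing θ with
  | zero =>
    have h2 : Real.sin (2 * θ) = 2 * Real.sin θ * Real.cos θ := Real.sin_two_mul θ
    simp only [p]
    norm_num
    linear_combination (-2 * Real.cos θ) * h2
  | one =>
    have h3 : Real.sin (3 * θ) = Real.sin (2*θ + θ) := by ring_nf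
    rw [Real.sin_add, Real.sin_two_mul, Real.cos_two_mul] at h3
    simp only [p]
    norm_num
    linear_combination (-4 * Real.cos θ ^ 2) * h3
  | more n ih1 ih2 =>
    have hadd : Real.sin ((n+4) * θ) = Real.sin ((n+3)*θ) * Real.cos θ + Real.cos ((n+3)*θ) * Real.sin θ := by
      rw [← Real.sin_add]; ring_nf
    have hsub : Real.sin ((n+2) * θ) = Real.sin ((n+3)*θ) * Real.cos θ - Real.cos ((n+3)*θ) * Real.sin θ := by
      rw [← Real.sin_sub]; ring_nf
    have e1 := ih1 θ
    have e2 := ih2 θ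
    simp only [p]
    push_cast at e1 e2 ⊢
    ring_nf at e1 e2 hadd hsub ⊢
    linear_combination 4 * Real.cos θ ^ 2 * e2 - 4 * Real.cos θ ^ 2 * e1
      - 4 * Real.cos θ ^ 2 * (2 * Real.cos θ) ^ (n+1) * hadd
      - 4 * Real.cos θ ^ 2 * (2 * Real.cos θ) ^ (n+1) * hsub

lemma P_monic_deg : ∀ n : ℕ, (P n).Monic ∧ (P n).natDegree = n + 1 := by
  intro n
  induction n using Nat.twoStepInduction with
  | zero => exact ⟨monic_X, natDegree_X⟩
  | one =>
    have h1 : (X - 1 : Polynomial ℝ) = X - C 1 := by simp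
    have hm : (P 1).Monic := by
      rw [show P 1 = X * (X - 1) from rfl, h1]
      exact monic_X.mul (monic_X_sub_C 1)
    refine ⟨hm, ?_⟩
    rw [show P 1 = X * (X - 1) from rfl, h1, natDegree_mul (X_ne_zero) (monic_X_sub_C (1:ℝ)).ne_zero,
      natDegree_X, natDegree_X_sub_C]
  | more n ih1 ih2 =>
    obtain ⟨m1, d1⟩ := ih1
    obtain ⟨m2, d2⟩ := ih2
    have hdlt : (P n).degree < (P (n+1)).degree := by
      rw [degree_eq_natDegree m1.ne_zero, degree_eq_natDegree m2.ne_zero, d1, d2]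
      exact_mod_cast Nat.lt_succ_self _
    have hm : (P (n+1) - P n).Monic := by
      rw [sub_eq_add_neg]
      exact m2.add_of_left (by rwa [degree_neg])
    have hd : (P (n+1) - P n).natDegree = n + 2 := by
      have := degree_sub_eq_left_of_degree_lt hdlt
      have h2 := degree_eq_natDegree m2.ne_zero
      rw [d2] at h2
      rw [natDegree, this, h2]
      rfl
    refine ⟨monic_X.mul hm, ?_⟩
    rw [show P (n+2) = X * (P (n+1) - P n) from rfl,
      natDegree_mul X_ne_zero hm.ne_zero, natDegree_X, hd]
    omega

lemma X_pow_dvd : ∀ n : ℕ, (X : Polynomial ℝ) ^ ((n+2)/2) ∣ P n := by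
  intro n
  induction n using Nat.twoStepInduction with
  | zero => rw [show P 0 = X from rfl]; norm_num
  | one => rw [show P 1 = X * (X-1) from rfl]; norm_num
  | more n ih1 ih2 =>
    have h1 : (X : Polynomial ℝ) ^ ((n+2)/2) ∣ P (n+1) :=
      dvd_trans (pow_dvd_pow X (by omega)) ih2
    have h2 : (X : Polynomial ℝ) ^ ((n+2)/2) ∣ P (n+1) - P n := dvd_sub h1 ih1
    have : (n+2+2)/2 = (n+2)/2 + 1 := by omega
    rw [this, show P (n+2) = X * (P (n+1) - P n) from rfl, pow_succ, mul_comm ((X:Polynomial ℝ)^((n+2)/2)) X]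
    exact mul_dvd_mul_left X h2

noncomputable def rr (n k : ℕ) : ℝ := 4 * Real.cos ((k : ℝ) * Real.pi / ((n : ℝ) + 2)) ^ 2

lemma root_p (n k : ℕ) (hk1 : 1 ≤ k) (hk2 : k ≤ (n+2)/2) : p n (rr n k) = 0 := by
  have hn2 : (0:ℝ) < (n:ℝ) + 2 := by positivity
  set θ : ℝ := (k:ℝ) * Real.pi / ((n:ℝ)+2) with hθ
  have hkpos : (0:ℝ) < k := by exact_mod_cast hk1
  have hθpos : 0 < θ := div_pos (mul_pos hkpos Real.pi_pos) hn2
  have hθlt : θ < Real.pi := by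
    rw [hθ, div_lt_iff₀ hn2]
    have hkn : (k:ℝ) < (n:ℝ) + 2 := by exact_mod_cast (by omega : k < n + 2)
    nlinarith [Real.pi_pos]
  have hsin : Real.sin θ ≠ 0 := ne_of_gt (Real.sin_pos_of_pos_of_lt_pi hθpos hθlt)
  have hk := key n θ
  have harg : ((n:ℝ)+2) * θ = (k:ℝ) * Real.pi := by
    rw [hθ]; field_simp
  rw [harg, Real.sin_nat_mul_pi, mul_zero] at hk
  have : p n (4 * Real.cos θ ^ 2) = 0 := by
    rcases mul_eq_zero.mp hk with h | h
    · exact h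
    · exact absurd h hsin
  simpa [rr, hθ] using this

lemma theta_mem (n k : ℕ) (hk2 : k ≤ (n+2)/2) :
    (k : ℝ) * Real.pi / ((n:ℝ)+2) ∈ Set.Icc 0 (Real.pi/2) := by
  have hn2 : (0:ℝ) < (n:ℝ) + 2 := by positivity
  constructor
  · positivity
  · rw [div_le_iff₀ hn2]
    have hkn : 2 * (k:ℝ) ≤ (n:ℝ) + 2 := by exact_mod_cast (by omega : 2*k ≤ n + 2)
    nlinarith [Real.pi_pos]

lemma rr_injOn (n : ℕ) : ∀ j ∈ Finset.Icc 1 ((n+2)/2), ∀ k ∈ Finset.Icc 1 ((n+2)/2),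
    rr n j = rr n k → j = k := by
  intro j hj k hk h
  simp only [Finset.mem_Icc] at hj hk
  have hn2 : (0:ℝ) < (n:ℝ) + 2 := by positivity
  set a : ℝ := (j:ℝ) * Real.pi / ((n:ℝ)+2) with ha
  set b : ℝ := (k:ℝ) * Real.pi / ((n:ℝ)+2) with hb
  have hma := theta_mem n j hj.2
  have hmb := theta_mem n k hk.2
  have hca : 0 ≤ Real.cos a := Real.cos_nonneg_of_mem_Icc
    ⟨by linarith [hma.1, Real.pi_pos], hma.2⟩
  have hcb : 0 ≤ Real.cos b := Real.cos_nonneg_of_mem_Icc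
    ⟨by linarith [hmb.1, Real.pi_pos], hmb.2⟩
  have hsq : Real.cos a ^ 2 = Real.cos b ^ 2 := by
    have : (4:ℝ) * Real.cos a ^ 2 = 4 * Real.cos b ^ 2 := h
    linarith
  have hcos : Real.cos a = Real.cos b := by
    nlinarith [hsq, hca, hcb]
  have hab : a = b := by
    apply Real.injOn_cos _ _ hcos
    · exact ⟨hma.1, by linarith [hma.2, Real.pi_pos]⟩
    · exact ⟨hmb.1, by linarith [hmb.2, Real.pi_pos]⟩
  have : (j:ℝ) = (k:ℝ) := by
    have hπ := Real.pi_ne_zero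
    rw [ha, hb] at hab
    field_simp at hab
    linarith
  exact_mod_cast this

lemma root_P (n k : ℕ) (hk1 : 1 ≤ k) (hk2 : k ≤ (n+2)/2) : (P n).eval (rr n k) = 0 := by
  rw [← p_eval]
  exact root_p n k hk1 hk2

noncomputable def Q (n : ℕ) : Polynomial ℝ :=
  X ^ ((n+1)/2) * ∏ k ∈ Finset.Icc 1 ((n+2)/2), (X - C (rr n k))

lemma prod_dvd (n : ℕ) (s : Finset ℕ) (hs : s ⊆ Finset.Icc 1 ((n+2)/2))
    (P₁ : Polynomial ℝ) (hP : P n = X ^ ((n+2)/2) * P₁)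
    (hnz : ∀ k ∈ s, rr n k ≠ 0) :
    (∏ k ∈ s, (X - C (rr n k))) ∣ P₁ := by
  have hP₁ : P₁ ≠ 0 := by
    intro h
    have := (P_monic_deg n).1.ne_zero
    rw [hP, h, mul_zero] at this
    exact this rfl
  have hroot : ∀ k ∈ s, P₁.eval (rr n k) = 0 := by
    intro k hk
    have hks := Finset.mem_Icc.mp (hs hk)
    have h0 := root_P n k hks.1 hks.2
    rw [hP] at h0
    simp only [eval_mul, eval_pow, eval_X] at h0
    rcases mul_eq_zero.mp h0 with h | h
    · exact absurd (pow_eq_zero_iff (by omega : (n+2)/2 ≠ 0) |>.mp h) (hnz k hk)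
    · exact h
  -- multiset of roots
  have hM : (s.val.map (rr n)) ≤ P₁.roots := by
    rw [Multiset.le_iff_subset]
    · intro x hx
      obtain ⟨k, hk, rfl⟩ := Multiset.mem_map.mp hx
      exact (mem_roots hP₁).mpr (hroot k hk)
    · exact Multiset.Nodup.map_on
        (fun j hj k hk h => rr_injOn n j (hs hj) k (hs hk) h) s.nodup
  calc (∏ k ∈ s, (X - C (rr n k)))
      = ((s.val.map (rr n)).map (fun a => X - C a)).prod := by
        rw [Multiset.map_map]; rfl
    _ ∣ (P₁.roots.map (fun a => X - C a)).prod :=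
        Multiset.prod_dvd_prod_of_le (Multiset.map_le_map hM)
    _ ∣ P₁ := prod_multiset_X_sub_C_dvd P₁

lemma rr_ne (n k : ℕ) (h2 : 2*k < n+2) : rr n k ≠ 0 := by
  have hn2 : (0:ℝ) < (n:ℝ) + 2 := by positivity
  have hθlt : (k:ℝ) * Real.pi / ((n:ℝ)+2) < Real.pi / 2 := by
    rw [div_lt_iff₀ hn2]
    have : 2 * (k:ℝ) < (n:ℝ) + 2 := by exact_mod_cast h2
    nlinarith [Real.pi_pos]
  have hθ0 : (0:ℝ) ≤ (k:ℝ) * Real.pi / ((n:ℝ)+2) := by positivity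
  have hc : 0 < Real.cos ((k:ℝ) * Real.pi / ((n:ℝ)+2)) :=
    Real.cos_pos_of_mem_Ioo ⟨by nlinarith [Real.pi_pos], hθlt⟩
  simp only [rr]
  positivity

lemma Q_monic (n : ℕ) : (Q n).Monic :=
  (monic_X_pow _).mul (monic_prod_of_monic _ _ fun k _ => monic_X_sub_C _)

lemma Q_deg (n : ℕ) : (Q n).natDegree = n + 1 := by
  rw [Q, natDegree_mul (pow_ne_zero _ (X_ne_zero : (X:Polynomial ℝ) ≠ 0))
    (monic_prod_of_monic _ _ fun k _ => monic_X_sub_C (rr n k)).ne_zero,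
    natDegree_X_pow, natDegree_prod _ _ (fun k _ => (monic_X_sub_C _).ne_zero)]
  simp only [natDegree_X_sub_C, Finset.sum_const, smul_eq_mul, mul_one, Nat.card_Icc]
  omega

lemma Q_dvd_P (n : ℕ) : Q n ∣ P n := by
  obtain ⟨P₁, hP₁⟩ := X_pow_dvd n
  rcases Nat.even_or_odd n with he | ho
  · -- n even
    obtain ⟨m, rfl⟩ := he
    have ht : (m+m+2)/2 = m+1 := by omega
    have ha : (m+m+1)/2 = m := by omega
    have htr : rr (m+m) (m+1) = 0 := by
      have hc : ((m+m:ℕ):ℝ) + 2 = 2 * ((m+1:ℕ):ℝ) := by push_cast; ring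
      have hm1 : ((m+1:ℕ):ℝ) ≠ 0 := by positivity
      have harg : ((m+1:ℕ):ℝ) * Real.pi / (((m+m:ℕ):ℝ)+2) = Real.pi / 2 := by
        rw [hc]
        field_simp
      rw [rr]
      push_cast at harg ⊢
      rw [harg, Real.cos_pi_div_two]
      norm_num
    have hF : (∏ k ∈ Finset.Icc 1 m, (X - C (rr (m+m) k))) ∣ P₁ := by
      apply prod_dvd (m+m) _ (fun k hk => by
        simp only [Finset.mem_Icc] at hk ⊢; omega) P₁ hP₁
      intro k hk
      simp only [Finset.mem_Icc] at hk
      exact rr_ne (m+m) k (by omega)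
    have hsplit : (∏ k ∈ Finset.Icc 1 (m+1), (X - C (rr (m+m) k)))
        = (∏ k ∈ Finset.Icc 1 m, (X - C (rr (m+m) k))) * (X - C (rr (m+m) (m+1))) :=
      Finset.prod_Icc_succ_top (by omega) _
    have hQ : Q (m+m) = X ^ (m+1) * ∏ k ∈ Finset.Icc 1 m, (X - C (rr (m+m) k)) := by
      rw [Q, ht, ha, hsplit, htr]
      simp only [map_zero, sub_zero]
      ring
    rw [hQ, hP₁, ht]
    exact mul_dvd_mul_left _ hF
  · -- n odd
    obtain ⟨m, rfl⟩ := ho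
    have ht : (2*m+1+2)/2 = m+1 := by omega
    have ha : (2*m+1+1)/2 = m+1 := by omega
    have hF : (∏ k ∈ Finset.Icc 1 ((2*m+1+2)/2), (X - C (rr (2*m+1) k))) ∣ P₁ := by
      apply prod_dvd (2*m+1) _ (le_refl _) P₁ hP₁
      intro k hk
      simp only [Finset.mem_Icc] at hk
      exact rr_ne (2*m+1) k (by omega)
    rw [Q, ha, hP₁, ht]
    rw [ht] at hF
    exact mul_dvd_mul_left _ hF

lemma P_eq_Q (n : ℕ) : P n = Q n := by
  obtain ⟨u, hu⟩ := Q_dvd_P n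
  have hPm := (P_monic_deg n).1
  have hPd := (P_monic_deg n).2
  have hu0 : u ≠ 0 := by
    intro h; rw [h, mul_zero] at hu; exact hPm.ne_zero hu
  have hdu : u.natDegree = 0 := by
    have := natDegree_mul (Q_monic n).ne_zero hu0
    rw [← hu, hPd, Q_deg] at this
    omega
  have hlc : u.leadingCoeff = 1 := by
    have := leadingCoeff_mul (Q n) u
    rw [← hu, hPm.leadingCoeff, (Q_monic n).leadingCoeff, one_mul] at this
    exact this.symm
  have hc0 : u.coeff 0 = 1 := by
    rw [← hlc, leadingCoeff, hdu]
  have : u = 1 := by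
    rw [eq_C_of_natDegree_eq_zero hdu, hc0, map_one]
  rw [hu, this, mul_one]

end Aux

theorem stmt_2 (n : ℕ) (x : ℝ) :
    p n x = x ^ ((n+1)/2) *
      ∏ k ∈ Finset.Icc 1 ((n+2)/2),
        (x - 4 * Real.cos ((k : ℝ) * Real.pi / ((n : ℝ) + 2)) ^ 2) := by
  rw [p_eval, P_eq_Q, Q]
  simp [Polynomial.eval_prod, rr]
end

section
/- For all n ≥ 0, p_n(α_{n+2}) = α_{n+2}^{(n+2)/2}, where α_{n+2} = 4cos²(π/(n+4)). -/
open Real Finset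

lemma p_key (θ : ℝ) : ∀ n : ℕ,
    p n (4 * Real.cos θ ^ 2) * Real.sin θ
      = (2 * Real.cos θ) ^ (n + 1) * Real.sin (((n : ℝ) + 2) * θ) := by
  intro n
  induction n using Nat.twoStepInduction with
  | zero =>
      simp only [p, Nat.cast_zero, zero_add, pow_one]
      rw [show ((2:ℝ) * θ) = 2 * θ from rfl, Real.sin_two_mul]
      ring
  | one =>
      simp only [p, Nat.cast_one]
      have h3 : ((1:ℝ) + 2) * θ = 3 * θ := by ring
      rw [h3, Real.sin_three_mul]
      have hs := Real.sin_sq_add_cos_sq θ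
      linear_combination (16 * Real.cos θ ^ 2 * Real.sin θ) * hs
  | more k ih1 ih2 =>
      simp only [p]
      have hc : ((k : ℝ) + 2 + 2) * θ = ((k : ℝ) + 3) * θ + θ := by ring
      have hc2 : ((k : ℝ) + 2) * θ = ((k : ℝ) + 3) * θ - θ := by ring
      have hc1 : ((k : ℝ) + 1 + 2) * θ = ((k : ℝ) + 3) * θ := by ring
      have key : Real.sin (((k : ℝ) + 2 + 2) * θ)
          = 2 * Real.cos θ * Real.sin (((k : ℝ) + 3) * θ) - Real.sin (((k : ℝ) + 2) * θ) := by
        rw [hc, hc2, Real.sin_add, Real.sin_sub]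
        ring
      have e1 : p (k + 1) (4 * Real.cos θ ^ 2) * Real.sin θ
          = (2 * Real.cos θ) ^ (k + 2) * Real.sin (((k : ℝ) + 3) * θ) := by
        rw [ih2]
        push_cast
        rw [hc1]
      have e0 := ih1
      have : (4 * Real.cos θ ^ 2) * (p (k + 1) (4 * Real.cos θ ^ 2)
            - p k (4 * Real.cos θ ^ 2)) * Real.sin θ
          = (4 * Real.cos θ ^ 2) * (p (k + 1) (4 * Real.cos θ ^ 2) * Real.sin θ)
            - (4 * Real.cos θ ^ 2) * (p k (4 * Real.cos θ ^ 2) * Real.sin θ) := by ring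
      rw [this, e1, e0]
      push_cast
      rw [key]
      ring

theorem stmt_4 (n : ℕ) :
    p n (4 * Real.cos (Real.pi / ((n : ℝ) + 4)) ^ 2) =
      (4 * Real.cos (Real.pi / ((n : ℝ) + 4)) ^ 2) ^ (((n : ℝ) + 2) / 2) := by
  set θ : ℝ := Real.pi / ((n : ℝ) + 4) with hθ
  have hn4 : (0:ℝ) < (n : ℝ) + 4 := by positivity
  have hθpos : 0 < θ := by
    apply div_pos Real.pi_pos hn4
  have hθlt : θ < Real.pi / 2 := by
    rw [hθ, div_lt_div_iff₀ hn4 (by norm_num)]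
    nlinarith [Real.pi_pos, Nat.cast_nonneg (α := ℝ) n]
  have hsin : 0 < Real.sin θ := Real.sin_pos_of_pos_of_lt_pi hθpos
    (lt_trans hθlt (by linarith [Real.pi_pos]))
  have hcos : 0 < Real.cos θ := Real.cos_pos_of_mem_Ioo ⟨by linarith [Real.pi_pos], hθlt⟩
  have hpi : ((n : ℝ) + 4) * θ = Real.pi := by
    rw [hθ]; field_simp
  have harg : ((n : ℝ) + 2) * θ = Real.pi - 2 * θ := by linarith
  have hsin2 : Real.sin (((n : ℝ) + 2) * θ) = 2 * Real.sin θ * Real.cos θ := by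
    rw [harg, Real.sin_pi_sub, Real.sin_two_mul]
  have hk := p_key θ n
  rw [hsin2] at hk
  have hp : p n (4 * Real.cos θ ^ 2) = (2 * Real.cos θ) ^ (n + 2) := by
    have h := hk
    have : p n (4 * Real.cos θ ^ 2) * Real.sin θ
        = (2 * Real.cos θ) ^ (n + 2) * Real.sin θ := by
      rw [h]; ring
    exact mul_right_cancel₀ (ne_of_gt hsin) this
  rw [hp]
  have hb : (0:ℝ) < 2 * Real.cos θ := by linarith
  have h4 : (4 * Real.cos θ ^ 2 : ℝ) = (2 * Real.cos θ) ^ (2:ℕ) := by ring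
  rw [h4, ← Real.rpow_natCast (2 * Real.cos θ) 2, ← Real.rpow_mul hb.le]
  have hexp : (((2:ℕ)) : ℝ) * (((n : ℝ) + 2) / 2) = ((n + 2 : ℕ) : ℝ) := by
    push_cast; ring
  rw [hexp, Real.rpow_natCast]
end

section
/- For all n ≥ 0 and all real x with x ≥ α_{n+2} = 4cos²(π/(n+4)), we have p_{n+1}(x) ≥ p_n(x). -/
open Real Finset

lemma p_big (x : ℝ) (hx : 4 ≤ x) : ∀ k, 0 ≤ p k x ∧ 2 * p k x ≤ p (k+1) x := by
  intro k
  induction k with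
  | zero =>
    constructor
    · show (0:ℝ) ≤ p 0 x; simp only [p]; linarith
    · show 2 * p 0 x ≤ p 1 x; simp only [p]; nlinarith
  | succ m ih =>
    obtain ⟨h0, h1⟩ := ih
    have hp1 : 0 ≤ p (m+1) x := by linarith
    refine ⟨hp1, ?_⟩
    show 2 * p (m+1) x ≤ p (m+2) x
    have : p (m+2) x = x * (p (m+1) x - p m x) := by simp [p]
    rw [this]
    nlinarith

lemma p_formula (θ : ℝ) (k : ℕ) :
    Real.sin θ * p k (4 * Real.cos θ ^ 2) =
      (2 * Real.cos θ)^(k+1) * Real.sin (((k:ℝ)+2)*θ) := by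
  induction k using Nat.twoStepInduction with
  | zero =>
    simp only [p, Nat.cast_zero]
    have h2 : ((0:ℝ)+2)*θ = 2*θ := by ring
    rw [h2, Real.sin_two_mul]
    ring
  | one =>
    simp only [p, Nat.cast_one]
    have h3 : ((1:ℝ)+2)*θ = 3*θ := by ring
    rw [h3, Real.sin_three_mul]
    have h := Real.sin_sq_add_cos_sq θ
    linear_combination (16 * Real.cos θ ^ 2 * Real.sin θ) * h
  | more m ih1 ih2 =>
    have e3 : (((m+1:ℕ)):ℝ)+2 = (m:ℝ)+3 := by push_cast; ring
    rw [e3] at ih2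
    have e2 : ((m:ℝ)+2)*θ = ((m:ℝ)+3)*θ - θ := by ring
    rw [e2, Real.sin_sub] at ih1
    have hrec : p (m+2) (4 * Real.cos θ ^ 2) =
        (4 * Real.cos θ ^ 2) * (p (m+1) (4 * Real.cos θ ^ 2) - p m (4 * Real.cos θ ^ 2)) := by
      simp [p]
    have e4 : (((m+2:ℕ)):ℝ)+2 = (m:ℝ)+4 := by push_cast; ring
    rw [e4, hrec]
    have e1 : ((m:ℝ)+4)*θ = ((m:ℝ)+3)*θ + θ := by ring
    rw [e1, Real.sin_add]
    linear_combination (4*Real.cos θ^2) * ih2 - (4*Real.cos θ^2) * ih1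

theorem stmt_7 (n : ℕ) (x : ℝ)
    (hx : x ≥ 4 * Real.cos (Real.pi / ((n : ℝ) + 4)) ^ 2) :
    p (n+1) x ≥ p n x := by
  by_cases h4 : 4 ≤ x
  · obtain ⟨h0, h1⟩ := p_big x h4 (n+1)
    obtain ⟨h2, h3⟩ := p_big x h4 n
    linarith
  · push_neg at h4
    have hπ := Real.pi_pos
    have hn4 : (0:ℝ) < (n:ℝ) + 4 := by positivity
    have hle4 : Real.pi / ((n:ℝ)+4) ≤ Real.pi/4 := by
      have h0n : (0:ℝ) ≤ (n:ℝ) := Nat.cast_nonneg n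
      gcongr <;> linarith
    have hlt2 : Real.pi / ((n:ℝ)+4) < Real.pi/2 := by
      have : Real.pi/4 < Real.pi/2 := by linarith
      linarith
    have hge0 : 0 < Real.pi / ((n:ℝ)+4) := by positivity
    set c := Real.cos (Real.pi / ((n:ℝ)+4)) with hc
    have hc0 : 0 < c := Real.cos_pos_of_mem_Ioo ⟨by linarith, hlt2⟩
    have hx0 : (0:ℝ) ≤ x := le_trans (by positivity) hx
    have hsqrt4 : Real.sqrt 4 = 2 := by
      rw [show (4:ℝ) = 2^2 by norm_num, Real.sqrt_sq (by norm_num)]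
    set t := Real.sqrt x / 2 with ht
    have ht0 : 0 ≤ t := by positivity
    have ht1 : t ≤ 1 := by
      have : Real.sqrt x ≤ Real.sqrt 4 := Real.sqrt_le_sqrt h4.le
      rw [hsqrt4] at this
      rw [ht]; linarith
    have htlt1 : t < 1 := by
      have : Real.sqrt x < Real.sqrt 4 := Real.sqrt_lt_sqrt hx0 h4
      rw [hsqrt4] at this
      rw [ht]; linarith
    have htc : c ≤ t := by
      have h2c : Real.sqrt (4*c^2) = 2*c := by
        rw [show 4*c^2 = (2*c)^2 by ring, Real.sqrt_sq (by linarith)]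
      have : Real.sqrt (4*c^2) ≤ Real.sqrt x := Real.sqrt_le_sqrt hx
      rw [h2c] at this
      rw [ht]; linarith
    set θ := Real.arccos t with hθ
    have hcosθ : Real.cos θ = t := Real.cos_arccos (by linarith) ht1
    have h4cos : 4 * Real.cos θ ^ 2 = x := by
      rw [hcosθ, ht]
      rw [div_pow, Real.sq_sqrt hx0]
      ring
    have hθpos : 0 < θ := Real.arccos_pos.mpr htlt1
    have hθle : θ ≤ Real.pi / ((n:ℝ)+4) := by
      have : Real.arccos t ≤ Real.arccos c := by
        rw [Real.arccos, Real.arccos]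
        have := Real.monotone_arcsin htc
        linarith
      rwa [hc, Real.arccos_cos hge0.le (by linarith)] at this
    have hθltpi : θ < Real.pi := by linarith
    have hs : 0 < Real.sin θ := Real.sin_pos_of_pos_of_lt_pi hθpos hθltpi
    have hcθ : 0 ≤ Real.cos θ := by rw [hcosθ]; exact ht0
    have F1 := p_formula θ n
    have F2 := p_formula θ (n+1)
    rw [h4cos] at F1 F2
    have hcast : (((n:ℕ)+1:ℕ):ℝ)+2 = (n:ℝ)+3 := by push_cast; ring
    rw [hcast] at F2
    have hsin4 : 0 ≤ Real.sin (((n:ℝ)+4)*θ) := by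
      apply Real.sin_nonneg_of_nonneg_of_le_pi
      · positivity
      · have : ((n:ℝ)+4)*θ ≤ ((n:ℝ)+4) * (Real.pi/((n:ℝ)+4)) := by
          apply mul_le_mul_of_nonneg_left hθle (by linarith)
        rw [mul_div_cancel₀ _ (by linarith : ((n:ℝ)+4) ≠ 0)] at this
        linarith
    have hiden : Real.sin (((n:ℝ)+4)*θ) + Real.sin (((n:ℝ)+2)*θ) =
        2 * Real.cos θ * Real.sin (((n:ℝ)+3)*θ) := by
      have e1 : ((n:ℝ)+4)*θ = ((n:ℝ)+3)*θ + θ := by ring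
      have e2 : ((n:ℝ)+2)*θ = ((n:ℝ)+3)*θ - θ := by ring
      rw [e1, e2, Real.sin_add, Real.sin_sub]
      ring
    have hpow : (0:ℝ) ≤ (2*Real.cos θ)^(n+1) := by positivity
    have key : Real.sin θ * p n x ≤ Real.sin θ * p (n+1) x := by
      rw [F1, F2]
      have : (2*Real.cos θ)^(n+1+1) * Real.sin (((n:ℝ)+3)*θ) =
          (2*Real.cos θ)^(n+1) * (2*Real.cos θ*Real.sin (((n:ℝ)+3)*θ)) := by ring
      rw [this, ← hiden]
      nlinarith [mul_le_mul_of_nonneg_left (by linarith : Real.sin (((n:ℝ)+2)*θ) ≤ Real.sin (((n:ℝ)+4)*θ) + Real.sin (((n:ℝ)+2)*θ)) hpow]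
    exact le_of_mul_le_mul_left key hs
end

section
/- For all n ≥ 0, 2cos^{n+1}(π/(n+3)) ≥ 1. -/
open Real

set_option maxHeartbeats 1000000 in
theorem stmt_10 (n : ℕ) :
    2 * Real.cos (Real.pi / ((n : ℝ) + 3)) ^ (n + 1) ≥ 1 := by
  match n with
  | 0 =>
    norm_num [Real.cos_pi_div_three]
  | 1 =>
    have : ((1:ℕ):ℝ) + 3 = 4 := by norm_num
    rw [this, Real.cos_pi_div_four]
    rw [ge_iff_le, show (1:ℕ)+1 = 2 from rfl, div_pow, Real.sq_sqrt (by norm_num : (2:ℝ) ≥ 0)]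
    norm_num
  | (k + 2) =>
    set m : ℝ := (k : ℝ) + 3 with hm
    have hk : (0:ℝ) ≤ (k:ℝ) := Nat.cast_nonneg k
    have hm1 : (3:ℝ) ≤ m := by rw [hm]; linarith
    have hmpos : (0:ℝ) < m := by linarith
    set L : ℝ := Real.log 2 with hL
    have hL1 : 0.6931471803 < L := Real.log_two_gt_d9
    have hL2 : L < 0.6931471808 := Real.log_two_lt_d9
    set a : ℝ := L / m with ha
    have hapos : 0 < a := div_pos (by linarith) hmpos
    have hpi : Real.pi < 3.141593 := Real.pi_lt_d6
    have hpipos := Real.pi_pos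
    have hpi2 : Real.pi ^ 2 < 9.8696081 := by nlinarith
    set x : ℝ := Real.pi / (m + 2) with hx
    have hxpos : 0 < x := div_pos hpipos (by linarith)
    have hcos : 1 - x ^ 2 / 2 ≤ Real.cos x := Real.one_sub_sq_div_two_le_cos
    have hexp : 1 + a + a ^ 2 / 2 ≤ Real.exp a := Real.quadratic_le_exp_of_nonneg hapos.le
    -- key numeric inequality
    have key : 1 ≤ (1 - x ^ 2 / 2) * (1 + a + a ^ 2 / 2) := by
      rw [hx, ha, div_pow, div_pow]
      have hm2 : (0:ℝ) < m + 2 := by linarith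
      have expand : (1 - Real.pi ^ 2 / (m + 2) ^ 2 / 2) * (1 + L / m + L ^ 2 / m ^ 2 / 2)
          = ((2 * L * m + L ^ 2) * (m + 2) ^ 2 + 2 * m ^ 2 * (m + 2) ^ 2
              - Real.pi ^ 2 * (m ^ 2 + L * m + L ^ 2 / 2)) / (2 * m ^ 2 * (m + 2) ^ 2) := by
        field_simp
        ring
      rw [expand, le_div_iff₀ (by positivity)]
      have hmain : Real.pi ^ 2 * (m ^ 2 + L * m + L ^ 2 / 2) ≤ (2 * L * m + L ^ 2) * (m + 2) ^ 2 := by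
        have hQpos : (0:ℝ) < m ^ 2 + L * m + L ^ 2 / 2 := by positivity
        have h1 : Real.pi ^ 2 * (m ^ 2 + L * m + L ^ 2 / 2)
            ≤ 9.8696081 * (m ^ 2 + L * m + L ^ 2 / 2) :=
          mul_le_mul_of_nonneg_right hpi2.le hQpos.le
        have h2 : 9.8696081 * (m ^ 2 + L * m + L ^ 2 / 2)
            ≤ 9.8696081 * (m ^ 2 + 0.6931472 * m + 0.2402466) := by
          nlinarith [hmpos, hL2, hL1]
        have hLsq : (0.48045288:ℝ) ≤ L ^ 2 := by nlinarith [hL1]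
        have h3 : (2 * (0.6931471:ℝ) * m + 0.48045288) * (m + 2) ^ 2
            ≤ (2 * L * m + L ^ 2) * (m + 2) ^ 2 := by
          apply mul_le_mul_of_nonneg_right _ (sq_nonneg _)
          nlinarith [hLsq, hmpos, hL1]
        have h4 : (9.8696081:ℝ) * (m ^ 2 + 0.6931472 * m + 0.2402466)
            ≤ (2 * (0.6931471:ℝ) * m + 0.48045288) * (m + 2) ^ 2 := by
          nlinarith [hm1, sq_nonneg (m - 3), mul_nonneg (mul_nonneg (by linarith : (0:ℝ) ≤ m - 3) hmpos.le) hmpos.le, mul_nonneg (sq_nonneg (m - 3)) hmpos.le]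
        linarith
      nlinarith [hmain, sq_nonneg m, sq_nonneg (m + 2)]
    have hce : 1 ≤ Real.cos x * Real.exp a := by
      have h1 : 0 ≤ 1 - x ^ 2 / 2 := by nlinarith [key, hapos, sq_nonneg a]
      calc 1 ≤ (1 - x ^ 2 / 2) * (1 + a + a ^ 2 / 2) := key
        _ ≤ Real.cos x * Real.exp a := by
            apply mul_le_mul hcos hexp (by positivity) ?_
            linarith [hcos]
    have hcge : Real.exp (-a) ≤ Real.cos x := by
      rw [Real.exp_neg, inv_le_iff_one_le_mul₀ (Real.exp_pos a)]
      linarith [hce]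
    have hpow : Real.exp (-a) ^ (k + 3) ≤ Real.cos x ^ (k + 3) :=
      pow_le_pow_left₀ (Real.exp_pos _).le hcge _
    have hval : Real.exp (-a) ^ (k + 3) = 1 / 2 := by
      rw [← Real.exp_nat_mul]
      have hma : ((k + 3 : ℕ) : ℝ) * (-a) = -L := by
        rw [ha]
        field_simp [hm]
        push_cast
        ring
      rw [hma, Real.exp_neg, Real.exp_log (by norm_num : (0:ℝ) < 2)]
      norm_num
    have hfin : (1:ℝ) / 2 ≤ Real.cos x ^ (k + 3) := hval ▸ hpow
    have harg : ((k + 2 : ℕ) : ℝ) + 3 = m + 2 := by rw [hm]; push_cast; ring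
    rw [ge_iff_le, harg, show k + 2 + 1 = k + 3 from rfl]
    linarith [hfin]
end

section
/- For all n ≥ 0, the polynomial p_n is strictly increasing on the interval [α_n, ∞), where α_n = 4cos²(π/(n+2)) is its largest real root. -/
open Real Finset

namespace Stmt13Aux

open Polynomial

noncomputable def P : ℕ → Polynomial ℝ
  | 0 => X
  | 1 => X * (X - C 1)
  | (n+2) => X * (P (n+1) - P n)

lemma eval_P : ∀ (n : ℕ) (x : ℝ), (P n).eval x = p n x
  | 0, x => by simp [P, p]
  | 1, x => by simp [P, p]
  | (n+2), x => by
      simp only [P, p, eval_mul, eval_X, eval_sub, eval_P (n+1) x, eval_P n x]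

lemma trig : ∀ (n : ℕ) (θ : ℝ),
    p n (4 * cos θ ^ 2) * sin θ = (2 * cos θ) ^ (n + 1) * sin (((n : ℝ) + 2) * θ)
  | 0, θ => by
      have h2 := Real.sin_two_mul θ
      simp only [p]
      push_cast
      norm_num
      rw [h2]
      ring
  | 1, θ => by
      have h3 := Real.sin_three_mul θ
      have hsq := Real.sin_sq_add_cos_sq θ
      simp only [p]
      push_cast
      norm_num
      rw [h3]
      linear_combination (16 * cos θ ^ 2 * sin θ) * hsq
  | (n+2), θ => by
      have ih1 := trig n θ
      have ih2 := trig (n+1) θ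
      have h : sin (((n : ℝ) + 4) * θ) + sin (((n : ℝ) + 2) * θ)
          = 2 * sin (((n : ℝ) + 3) * θ) * cos θ := by
        rw [show ((n:ℝ) + 4) * θ = ((n:ℝ) + 3) * θ + θ by ring,
          show ((n:ℝ) + 2) * θ = ((n:ℝ) + 3) * θ - θ by ring, Real.sin_add, Real.sin_sub]
        ring
      simp only [p]
      push_cast at ih1 ih2 ⊢
      ring_nf at ih1 ih2 h ⊢
      linear_combination (4 * cos θ ^ 2) * ih2 - (4 * cos θ ^ 2) * ih1
        - (2 * cos θ) ^ (n + 3) * h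

lemma root_p (n k : ℕ) (hk1 : 1 ≤ k) (hk2 : 2 * k < n + 2) :
    p n (4 * cos ((k : ℝ) * π / ((n : ℝ) + 2)) ^ 2) = 0 := by
  set θ := (k : ℝ) * π / ((n : ℝ) + 2) with hθ
  have hn : (0:ℝ) < (n : ℝ) + 2 := by positivity
  have hk1' : (1:ℝ) ≤ (k : ℝ) := by exact_mod_cast hk1
  have hθpos : 0 < θ := by
    apply div_pos _ hn
    positivity
  have hθlt : θ < π := by
    rw [hθ, div_lt_iff₀ hn]
    have : (k : ℝ) < (n : ℝ) + 2 := by exact_mod_cast (by omega : k < n + 2)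
    nlinarith [Real.pi_pos]
  have hs : 0 < sin θ := Real.sin_pos_of_pos_of_lt_pi hθpos hθlt
  have h0 : sin (((n : ℝ) + 2) * θ) = 0 := by
    have he : ((n : ℝ) + 2) * θ = (k : ℝ) * π := by
      rw [hθ]; field_simp
    rw [he]
    exact Real.sin_nat_mul_pi k
  have ht := trig n θ
  rw [h0, mul_zero] at ht
  exact (mul_eq_zero.mp ht).resolve_right hs.ne'

lemma X_pow_dvd : ∀ n : ℕ, (X : ℝ[X]) ^ (n / 2 + 1) ∣ P n
  | 0 => by simp [P]
  | 1 => by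
      simp only [P]
      simpa using dvd_mul_right (X : ℝ[X]) (X - C 1)
  | (n+2) => by
      have h1 : (X : ℝ[X]) ^ (n / 2 + 1) ∣ P n := X_pow_dvd n
      have h2 : (X : ℝ[X]) ^ (n / 2 + 1) ∣ P (n+1) :=
        (pow_dvd_pow X (by omega : n / 2 + 1 ≤ (n+1) / 2 + 1)).trans (X_pow_dvd (n+1))
      have he : (n+2) / 2 + 1 = (n / 2 + 1) + 1 := by omega
      rw [show P (n+2) = X * (P (n+1) - P n) from rfl, he, pow_succ,
        mul_comm ((X:ℝ[X]) ^ (n/2+1)) X]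
      exact mul_dvd_mul dvd_rfl (dvd_sub h2 h1)

lemma monic_deg : ∀ n : ℕ, (P n).Monic ∧ (P n).natDegree = n + 1
  | 0 => ⟨monic_X, natDegree_X⟩
  | 1 => by
      constructor
      · exact monic_X.mul (monic_X_sub_C 1)
      · rw [show P 1 = X * (X - C 1) from rfl, monic_X.natDegree_mul (monic_X_sub_C 1),
          natDegree_X, natDegree_X_sub_C]
  | (n+2) => by
      obtain ⟨m1, d1⟩ := monic_deg n
      obtain ⟨m2, d2⟩ := monic_deg (n+1)
      have hdeg : (P n).degree < (P (n+1)).degree := by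
        rw [degree_eq_natDegree m1.ne_zero, degree_eq_natDegree m2.ne_zero, d1, d2]
        exact_mod_cast (by omega : n + 1 < n + 2)
      have msub : (P (n+1) - P n).Monic := m2.sub_of_left hdeg
      have dsub : (P (n+1) - P n).natDegree = n + 2 := by
        rw [natDegree_sub_eq_left_of_natDegree_lt (by rw [d1, d2]; omega), d2]
      constructor
      · exact monic_X.mul msub
      · rw [show P (n+2) = X * (P (n+1) - P n) from rfl, monic_X.natDegree_mul msub,
          natDegree_X, dsub]
        omega

lemma r_pos (n : ℕ) : ∀ k ∈ Finset.Icc 1 ((n+1)/2),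
    (0 < (k : ℝ) * π / ((n : ℝ) + 2) ∧ (k : ℝ) * π / ((n : ℝ) + 2) < π / 2) ∧
    0 < 4 * cos ((k : ℝ) * π / ((n : ℝ) + 2)) ^ 2 := by
  intro k hk
  have hn : (0:ℝ) < (n : ℝ) + 2 := by positivity
  rw [Finset.mem_Icc] at hk
  have hk1' : (1:ℝ) ≤ (k : ℝ) := by exact_mod_cast hk.1
  have hang1 : 0 < (k : ℝ) * π / ((n : ℝ) + 2) := by
    apply div_pos _ hn
    positivity
  have hang2 : (k : ℝ) * π / ((n : ℝ) + 2) < π / 2 := by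
    rw [div_lt_iff₀ hn]
    have : 2 * (k : ℝ) < (n : ℝ) + 2 := by exact_mod_cast (by omega : 2 * k < n + 2)
    nlinarith [Real.pi_pos]
  have hcos : 0 < cos ((k : ℝ) * π / ((n : ℝ) + 2)) :=
    Real.cos_pos_of_mem_Ioo ⟨by linarith [Real.pi_pos], hang2⟩
  exact ⟨⟨hang1, hang2⟩, by positivity⟩

lemma factor (n : ℕ) :
    P n = X ^ (n / 2 + 1) *
      ∏ k ∈ Finset.Icc 1 ((n+1) / 2), (X - C (4 * cos ((k : ℝ) * π / ((n : ℝ) + 2)) ^ 2)) := by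
  have hn : (0:ℝ) < (n : ℝ) + 2 := by positivity
  set r : ℕ → ℝ := fun k => 4 * cos ((k : ℝ) * π / ((n : ℝ) + 2)) ^ 2 with hr
  have hrinj : ∀ a ∈ Finset.Icc 1 ((n+1)/2), ∀ b ∈ Finset.Icc 1 ((n+1)/2),
      a ≠ b → r a ≠ r b := by
    have key : ∀ a ∈ Finset.Icc 1 ((n+1)/2), ∀ b ∈ Finset.Icc 1 ((n+1)/2),
        a < b → r b < r a := by
      intro a ha b hb hab
      obtain ⟨⟨ha1, ha2⟩, -⟩ := r_pos n a ha
      obtain ⟨⟨hb1, hb2⟩, -⟩ := r_pos n b hb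
      have hcb : 0 < cos ((b : ℝ) * π / ((n : ℝ) + 2)) :=
        Real.cos_pos_of_mem_Ioo ⟨by linarith [Real.pi_pos], hb2⟩
      have hablt : (a : ℝ) * π / ((n : ℝ) + 2) < (b : ℝ) * π / ((n : ℝ) + 2) := by
        have hab' : (a : ℝ) < (b : ℝ) := by exact_mod_cast hab
        have hpi := Real.pi_pos
        apply (div_lt_div_iff_of_pos_right hn).mpr
        nlinarith
      have hcos : cos ((b : ℝ) * π / ((n : ℝ) + 2)) < cos ((a : ℝ) * π / ((n : ℝ) + 2)) :=
        Real.strictAntiOn_cos ⟨ha1.le, by linarith [Real.pi_pos]⟩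
          ⟨hb1.le, by linarith [Real.pi_pos]⟩ hablt
      have := pow_lt_pow_left₀ hcos hcb.le (two_ne_zero)
      simp only [hr]
      nlinarith
    intro a ha b hb hab
    rcases lt_or_gt_of_ne hab with h | h
    · exact (key a ha b hb h).ne'
    · exact (key b hb a ha h).ne
  have hdvd2 : (∏ k ∈ Finset.Icc 1 ((n+1)/2), (X - C (r k))) ∣ P n := by
    apply Finset.prod_dvd_of_coprime
    · intro a ha b hb hab
      exact isCoprime_X_sub_C_of_isUnit_sub
        (isUnit_iff_ne_zero.mpr (sub_ne_zero_of_ne (hrinj a ha b hb hab)))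
    · intro k hk
      rw [Finset.mem_Icc] at hk
      rw [dvd_iff_isRoot, IsRoot, eval_P]
      exact root_p n k hk.1 (by omega)
  have hcop : IsCoprime ((X : ℝ[X]) ^ (n / 2 + 1))
      (∏ k ∈ Finset.Icc 1 ((n+1)/2), (X - C (r k))) := by
    apply IsCoprime.pow_left
    apply IsCoprime.prod_right
    intro k hk
    have hx : (0:ℝ) < r k := by rw [hr]; exact (r_pos n k hk).2
    have h0 : IsCoprime ((X : ℝ[X]) - C 0) (X - C (r k)) :=
      isCoprime_X_sub_C_of_isUnit_sub
        (isUnit_iff_ne_zero.mpr (by simpa using hx.ne'))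
    simpa using h0
  have hdvd : (X ^ (n / 2 + 1) *
      ∏ k ∈ Finset.Icc 1 ((n+1)/2), (X - C (r k))) ∣ P n :=
    hcop.mul_dvd (X_pow_dvd n) hdvd2
  have hmonD : (X ^ (n / 2 + 1) *
      ∏ k ∈ Finset.Icc 1 ((n+1)/2), (X - C (r k))).Monic :=
    (monic_X_pow _).mul (monic_prod_of_monic _ _ fun k _ => monic_X_sub_C _)
  have hdegD : (X ^ (n / 2 + 1) *
      ∏ k ∈ Finset.Icc 1 ((n+1)/2), (X - C (r k))).natDegree = n + 1 := by
    rw [(monic_X_pow _).natDegree_mul (monic_prod_of_monic _ _ fun k _ => monic_X_sub_C _),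
      natDegree_X_pow, natDegree_prod_of_monic _ _ fun k _ => monic_X_sub_C _]
    simp only [natDegree_X_sub_C]
    rw [Finset.sum_const, smul_eq_mul, mul_one, Nat.card_Icc]
    omega
  symm
  apply eq_of_dvd_of_natDegree_le_of_leadingCoeff hdvd
  · rw [hdegD, (monic_deg n).2]
  · rw [hmonD.leadingCoeff, (monic_deg n).1.leadingCoeff]

lemma p_eq (n : ℕ) (x : ℝ) :
    p n x = x ^ (n / 2 + 1) *
      ∏ k ∈ Finset.Icc 1 ((n+1) / 2), (x - 4 * cos ((k : ℝ) * π / ((n : ℝ) + 2)) ^ 2) := by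
  rw [← eval_P, factor]
  simp [eval_prod]

end Stmt13Aux

theorem stmt_13 (n : ℕ) :
    StrictMonoOn (p n) (Set.Ici (4 * Real.cos (Real.pi / ((n : ℝ) + 2)) ^ 2)) := by
  intro a ha b hb hab
  simp only [Set.mem_Ici] at ha hb
  have hα0 : (0:ℝ) ≤ 4 * Real.cos (Real.pi / ((n : ℝ) + 2)) ^ 2 := by positivity
  have ha0 : 0 ≤ a := le_trans hα0 ha
  have hn : (0:ℝ) < (n : ℝ) + 2 := by positivity
  have hrle : ∀ k ∈ Finset.Icc 1 ((n+1)/2),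
      4 * Real.cos ((k : ℝ) * π / ((n : ℝ) + 2)) ^ 2
        ≤ 4 * Real.cos (Real.pi / ((n : ℝ) + 2)) ^ 2 := by
    intro k hk
    obtain ⟨⟨h1, h2⟩, h3⟩ := Stmt13Aux.r_pos n k hk
    rw [Finset.mem_Icc] at hk
    have hk1' : (1:ℝ) ≤ (k : ℝ) := by exact_mod_cast hk.1
    have hpi := Real.pi_pos
    have hle : Real.pi / ((n : ℝ) + 2) ≤ (k : ℝ) * π / ((n : ℝ) + 2) := by
      apply (div_le_div_iff_of_pos_right hn).mpr
      nlinarith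
    have hcos : Real.cos ((k : ℝ) * π / ((n : ℝ) + 2)) ≤ Real.cos (Real.pi / ((n : ℝ) + 2)) :=
      Real.cos_le_cos_of_nonneg_of_le_pi (by positivity) (by linarith) hle
    have hcnn : 0 ≤ Real.cos ((k : ℝ) * π / ((n : ℝ) + 2)) :=
      Real.cos_nonneg_of_mem_Icc ⟨by linarith, h2.le⟩
    nlinarith
  rw [Stmt13Aux.p_eq n a, Stmt13Aux.p_eq n b]
  have h1 : ∀ k ∈ Finset.Icc 1 ((n+1)/2),
      0 ≤ a - 4 * Real.cos ((k : ℝ) * π / ((n : ℝ) + 2)) ^ 2 := by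
    intro k hk
    have := hrle k hk
    linarith
  have h2 : ∀ k ∈ Finset.Icc 1 ((n+1)/2),
      0 < b - 4 * Real.cos ((k : ℝ) * π / ((n : ℝ) + 2)) ^ 2 := by
    intro k hk
    have := hrle k hk
    linarith
  calc a ^ (n / 2 + 1) * ∏ k ∈ Finset.Icc 1 ((n+1)/2),
        (a - 4 * Real.cos ((k : ℝ) * π / ((n : ℝ) + 2)) ^ 2)
      ≤ a ^ (n / 2 + 1) * ∏ k ∈ Finset.Icc 1 ((n+1)/2),
        (b - 4 * Real.cos ((k : ℝ) * π / ((n : ℝ) + 2)) ^ 2) := by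
        apply mul_le_mul_of_nonneg_left _ (pow_nonneg ha0 _)
        exact Finset.prod_le_prod h1 (fun k hk => by linarith)
    _ < b ^ (n / 2 + 1) * ∏ k ∈ Finset.Icc 1 ((n+1)/2),
        (b - 4 * Real.cos ((k : ℝ) * π / ((n : ℝ) + 2)) ^ 2) := by
        apply mul_lt_mul_of_pos_right _ (Finset.prod_pos h2)
        exact pow_lt_pow_left₀ hab ha0 (by omega)
end

section
/- For all n ≥ 4, |α_{n+2} − α_{n+1}| ≤ 7³·(n+4)^{−3}/2, i.e., 8(cos²(π/(n+4)) − cos²(π/(n+3))) ≤ 343/(n+4)³, where α_m = 4cos²(π/(m+2)). -/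
open Real

set_option maxHeartbeats 1000000 in
lemma aux_stmt_14 (x : ℝ) (hx : 4 ≤ x) :
    8 * (Real.cos (Real.pi / (x + 4)) ^ 2 - Real.cos (Real.pi / (x + 3)) ^ 2) ≤
      343 / (x + 4) ^ 3 := by
  have h3 : (0:ℝ) < x + 3 := by linarith
  have h4 : (0:ℝ) < x + 4 := by linarith
  have hpi := Real.pi_pos
  have ha0 : 0 < Real.pi / (x + 4) := div_pos hpi h4
  have hb0 : 0 < Real.pi / (x + 3) := div_pos hpi h3
  set a : ℝ := Real.pi / (x + 4) with hadef
  set b : ℝ := Real.pi / (x + 3) with hbdef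
  have hble : b ≤ Real.pi / 2 := by
    rw [hbdef]
    exact div_le_div_of_nonneg_left hpi.le (by norm_num) (by linarith)
  have hab : a ≤ b := by
    rw [hadef, hbdef]
    exact div_le_div_of_nonneg_left hpi.le h3 (by linarith)
  have hapi : a ≤ Real.pi := le_trans (hab.trans hble) (by linarith)
  have hbpi : b ≤ Real.pi := le_trans hble (by linarith)
  have hsa : Real.sin a ≤ a := Real.sin_le ha0.le
  have hsb : Real.sin b ≤ b := Real.sin_le hb0.le
  have hsa0 : 0 ≤ Real.sin a := Real.sin_nonneg_of_nonneg_of_le_pi ha0.le hapi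
  have hsb0 : 0 ≤ Real.sin b := Real.sin_nonneg_of_nonneg_of_le_pi hb0.le hbpi
  have hssub := Real.sin_sub_sin b a
  have h1 : Real.sin ((b - a) / 2) ≤ (b - a) / 2 := Real.sin_le (by linarith)
  have h10 : 0 ≤ Real.sin ((b - a) / 2) :=
    Real.sin_nonneg_of_nonneg_of_le_pi (by linarith) (by linarith)
  have h2 : Real.cos ((b + a) / 2) ≤ 1 := Real.cos_le_one _
  have h20 : 0 ≤ Real.cos ((b + a) / 2) :=
    Real.cos_nonneg_of_mem_Icc ⟨by linarith, by linarith⟩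
  have hlip : Real.sin b - Real.sin a ≤ b - a := by
    rw [hssub]; nlinarith
  have hba : 0 ≤ Real.sin b - Real.sin a := by
    rw [hssub]; positivity
  have key : Real.cos a ^ 2 - Real.cos b ^ 2
      = (Real.sin b - Real.sin a) * (Real.sin b + Real.sin a) := by
    have hc1 := Real.sin_sq_add_cos_sq a
    have hc2 := Real.sin_sq_add_cos_sq b
    nlinarith [hc1, hc2]
  have hmain : 8 * (Real.cos a ^ 2 - Real.cos b ^ 2) ≤ 8 * ((b - a) * (b + a)) := by
    rw [key]
    nlinarith
  refine hmain.trans ?_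
  have heq : 8 * ((b - a) * (b + a))
      = (8 * Real.pi * Real.pi * (2 * x + 7)) / ((x + 3) ^ 2 * (x + 4) ^ 2) := by
    rw [hadef, hbdef]
    field_simp
    ring
  rw [heq, div_le_div_iff₀ (by positivity) (by positivity)]
  have hpilt : Real.pi < 3.15 := by
    have := Real.pi_lt_d2
    linarith
  have hpisq : Real.pi * Real.pi < 9.9225 := by nlinarith
  have hpoly : 8 * Real.pi * Real.pi * (2 * x + 7) * (x + 4) ≤ 343 * (x + 3) ^ 2 := by
    nlinarith [hpisq, hx, sq_nonneg (x - 4), mul_pos h3 h4]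
  have hfin := mul_le_mul_of_nonneg_right hpoly (sq_nonneg (x + 4))
  nlinarith [hfin]

theorem stmt_14 (n : ℕ) (hn : 4 ≤ n) :
    8 * (Real.cos (Real.pi / ((n : ℝ) + 4)) ^ 2 - Real.cos (Real.pi / ((n : ℝ) + 3)) ^ 2) ≤
      343 / ((n : ℝ) + 4) ^ 3 := by
  exact aux_stmt_14 (n : ℝ) (by exact_mod_cast hn)
end

section
/- If ρ ≥ 1 and n ≥ 0 are such that there exists a real a_0 > α_n with p_n(a_0) = ρ, then a_0 is unique; that is, p_n takes the value ρ at exactly one point in the interval (α_n, ∞), where α_n = 4cos²(π/(n+2)). -/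
open Real Finset

lemma p_cont : ∀ n, Continuous (p n)
  | 0 => continuous_id
  | 1 => by
      have : Continuous fun x : ℝ => x * (x - 1) := by fun_prop
      exact this.congr fun x => by rw [p]
  | (n+2) => by
      have h1 := p_cont (n+1)
      have h0 := p_cont n
      exact (continuous_id.mul (h1.sub h0)).congr fun x => by simp only [p, id, Pi.mul_apply, Pi.sub_apply]

lemma p_trig : ∀ (n : ℕ) (θ : ℝ),
    p n (4 * cos θ ^ 2) * sin θ = (2 * cos θ) ^ (n+1) * sin (((n:ℝ)+2) * θ)
  | 0, θ => by
      have h2 : sin (2 * θ) = 2 * sin θ * cos θ := Real.sin_two_mul θ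
      rw [p]
      norm_num
      rw [h2]; ring
  | 1, θ => by
      have h3 : sin (3 * θ) = 3 * sin θ - 4 * sin θ ^ 3 := Real.sin_three_mul θ
      have hsc : sin θ ^ 2 + cos θ ^ 2 = 1 := Real.sin_sq_add_cos_sq θ
      rw [p]
      push_cast
      norm_num
      rw [h3]
      linear_combination (16 * cos θ^2 * sin θ) * hsc
  | (n+2), θ => by
      have h1 := p_trig (n+1) θ
      have h0 := p_trig n θ
      rw [p]
      push_cast at h1 h0 ⊢
      have e4 : ((n:ℝ)+2+2) * θ = ((n:ℝ)+3) * θ + θ := by ring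
      have e2 : ((n:ℝ)+2) * θ = ((n:ℝ)+3) * θ - θ := by ring
      have e3 : ((n:ℝ)+1+2) * θ = ((n:ℝ)+3) * θ := by ring
      rw [e3] at h1
      rw [e2] at h0
      rw [e4, Real.sin_add]
      rw [Real.sin_sub] at h0
      linear_combination (4 * cos θ^2) * h1 - (4 * cos θ^2) * h0

noncomputable def F (n : ℕ) : ℝ → ℝ := fun θ => (2*cos θ)^(n+1) * sin (((n:ℝ)+2)*θ) / sin θ

lemma K_lemma : ∀ (m : ℕ) (θ : ℝ), 0 < θ → (m:ℝ) * θ < π →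
    (m:ℝ) * cos ((m:ℝ)*θ) * sin θ ≤ sin ((m:ℝ)*θ) * cos θ := by
  intro m
  induction m with
  | zero => intro θ h1 h2; simp
  | succ k ih =>
    intro θ hθ hmθ
    push_cast at hmθ ⊢
    rcases Nat.eq_zero_or_pos k with hk | hk
    · subst hk; norm_num; linarith [mul_comm (cos θ) (sin θ)]
    have hθ2 : θ < π / 2 := by
      have : (2:ℝ) ≤ (k:ℝ) + 1 := by exact_mod_cast Nat.succ_le_succ hk
      nlinarith [Real.pi_pos]
    have hc : 0 ≤ cos θ := le_of_lt (Real.cos_pos_of_mem_Ioo ⟨by linarith [Real.pi_pos], hθ2⟩)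
    have hkθ : (k:ℝ) * θ < π := by nlinarith
    have hK := ih θ hθ hkθ
    have hs : 0 ≤ sin ((k:ℝ)*θ) := Real.sin_nonneg_of_nonneg_of_le_pi (by positivity) (le_of_lt hkθ)
    have e1 : ((k:ℝ)+1) * θ = (k:ℝ)*θ + θ := by ring
    rw [e1, Real.sin_add, Real.cos_add]
    have hs2 : 0 ≤ sin θ := le_of_lt (Real.sin_pos_of_pos_of_lt_pi hθ (by nlinarith))
    nlinarith [mul_nonneg (mul_nonneg hs hs2) hs2, mul_nonneg hc (sub_nonneg.2 hK)]

lemma F_hasDerivAt (n : ℕ) (θ : ℝ) (hs : sin θ ≠ 0) :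
    HasDerivAt (F n)
      (((((n:ℝ)+1) * (2*cos θ)^n * (2*(-sin θ)) * sin (((n:ℝ)+2)*θ)
        + (2*cos θ)^(n+1) * (cos (((n:ℝ)+2)*θ) * ((n:ℝ)+2))) * sin θ
        - (2*cos θ)^(n+1) * sin (((n:ℝ)+2)*θ) * cos θ) / (sin θ)^2) θ := by
  have hc : HasDerivAt (fun θ : ℝ => 2 * cos θ) (2 * (-sin θ)) θ :=
    (Real.hasDerivAt_cos θ).const_mul 2
  have hcp : HasDerivAt (fun θ : ℝ => (2 * cos θ)^(n+1))
      (((n:ℝ)+1) * (2*cos θ)^n * (2*(-sin θ))) θ := by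
    have := hc.fun_pow (n+1)
    simpa using this
  have hlin : HasDerivAt (fun θ : ℝ => ((n:ℝ)+2) * θ) ((n:ℝ)+2) θ := by
    simpa using (hasDerivAt_id θ).const_mul ((n:ℝ)+2)
  have hsin : HasDerivAt (fun θ : ℝ => sin (((n:ℝ)+2)*θ)) (cos (((n:ℝ)+2)*θ) * ((n:ℝ)+2)) θ :=
    (Real.hasDerivAt_sin (((n:ℝ)+2)*θ)).comp θ hlin
  have hmul := hcp.mul hsin
  exact hmul.div (Real.hasDerivAt_sin θ) hs

lemma F_anti (n : ℕ) : StrictAntiOn (F n) (Set.Ioo 0 (π/((n:ℝ)+2))) := by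
  have hn2 : (0:ℝ) < (n:ℝ)+2 := by positivity
  have facts : ∀ θ ∈ Set.Ioo (0:ℝ) (π/((n:ℝ)+2)),
      0 < sin θ ∧ 0 < cos θ ∧ ((n:ℝ)+2)*θ < π ∧ 0 < sin (((n:ℝ)+2)*θ) := by
    rintro θ ⟨h1, h2⟩
    have hθπ : ((n:ℝ)+2) * θ < π := by
      rw [lt_div_iff₀ hn2] at h2; linarith [h2]
    have hθ2 : θ < π/2 := by nlinarith
    have hsθ : 0 < sin θ := Real.sin_pos_of_pos_of_lt_pi h1 (by linarith [Real.pi_pos])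
    have hcθ : 0 < cos θ := Real.cos_pos_of_mem_Ioo ⟨by linarith [Real.pi_pos], hθ2⟩
    have hS : 0 < sin (((n:ℝ)+2)*θ) := Real.sin_pos_of_pos_of_lt_pi (by positivity) hθπ
    exact ⟨hsθ, hcθ, hθπ, hS⟩
  apply strictAntiOn_of_deriv_neg (convex_Ioo _ _)
  · intro θ hθ
    obtain ⟨hsθ, -, -, -⟩ := facts θ hθ
    exact (F_hasDerivAt n θ (ne_of_gt hsθ)).continuousAt.continuousWithinAt
  · rw [interior_Ioo]
    intro θ hθ
    obtain ⟨hsθ, hcθ, hθπ, hS⟩ := facts θ hθ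
    rw [(F_hasDerivAt n θ (ne_of_gt hsθ)).deriv]
    apply div_neg_of_neg_of_pos _ (by positivity)
    have hK := K_lemma (n+2) θ hθ.1 (by push_cast; linarith)
    push_cast at hK
    have hKc : ((n:ℝ)+2) * cos (((n:ℝ)+2)*θ) * sin θ * cos θ ≤ sin (((n:ℝ)+2)*θ) * cos θ * cos θ :=
      mul_le_mul_of_nonneg_right hK (le_of_lt hcθ)
    have hpow : (2*cos θ)^(n+1) = (2*cos θ)^n * (2*cos θ) := pow_succ _ _
    have hPpos : 0 < (2*cos θ)^n := by positivity
    set P := (2*cos θ)^n with hP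
    set s := sin θ
    set c := cos θ
    set S := sin (((n:ℝ)+2)*θ)
    set C := cos (((n:ℝ)+2)*θ)
    rw [hpow]
    have hsc : s^2 + c^2 = 1 := Real.sin_sq_add_cos_sq θ
    nlinarith [mul_lt_mul_of_pos_left (mul_pos (mul_pos (mul_pos
        (by positivity : (0:ℝ) < (n:ℝ)+1) (mul_pos hsθ hsθ)) hS)
        (by norm_num : (0:ℝ) < 2)) hPpos,
      mul_le_mul_of_nonneg_left hKc (le_of_lt hPpos), sq_nonneg s]

lemma p_high : ∀ n : ℕ, ∀ x y : ℝ, 4 ≤ x → x < y →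
    0 < p n x ∧ 2 * p n x ≤ p (n+1) x ∧ 0 < p n y - p n x ∧
      2*(p n y - p n x) ≤ p (n+1) y - p (n+1) x := by
  intro n
  induction n with
  | zero =>
    intro x y hx hxy
    have h0 : ∀ z : ℝ, p 0 z = z := fun z => by rw [p]
    have h1 : ∀ z : ℝ, p 1 z = z * (z - 1) := fun z => by rw [p]
    rw [h0, h0, h1, h1]
    refine ⟨by linarith, by nlinarith, by linarith, by nlinarith⟩
  | succ k ih =>
    intro x y hx hxy
    obtain ⟨h1, h2, h3, h4⟩ := ih x y hx hxy
    have hy : (4:ℝ) ≤ y := by linarith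
    have e : ∀ z : ℝ, p (k+2) z = z * (p (k+1) z - p k z) := fun z => by rw [p]
    rw [e, e]
    have hgx : p (k+1) x - p k x ≥ p (k+1) x / 2 := by linarith
    have hgy : (p (k+1) y - p (k+1) x) - (p k y - p k x) ≥ (p (k+1) y - p (k+1) x)/2 := by linarith
    have hpx1 : 0 < p (k+1) x := by linarith
    refine ⟨by linarith, by nlinarith, by linarith, ?_⟩
    have key : y * (p (k+1) y - p k y) - x * (p (k+1) x - p k x)
        = y * ((p (k+1) y - p k y) - (p (k+1) x - p k x))
          + (y - x) * (p (k+1) x - p k x) := by ring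
    rw [key]
    have t1 : y * ((p (k+1) y - p k y) - (p (k+1) x - p k x))
        ≥ 4 * ((p (k+1) y - p (k+1) x)/2) := by
      have hpos : (0:ℝ) < (p (k+1) y - p (k+1) x)/2 := by linarith
      nlinarith
    have t2 : (y - x) * (p (k+1) x - p k x) ≥ 0 := by nlinarith
    linarith

-- for x in (α_n, 4), p n x = F n θ where θ = arccos (√x / 2)
lemma theta_spec (n : ℕ) {x : ℝ} (hax : 4 * cos (π / ((n:ℝ)+2)) ^ 2 < x) (hx4 : x < 4) :
    Real.arccos (Real.sqrt x / 2) ∈ Set.Ioo 0 (π/((n:ℝ)+2)) ∧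
    4 * cos (Real.arccos (Real.sqrt x / 2)) ^ 2 = x := by
  have hn2 : (0:ℝ) < (n:ℝ)+2 := by positivity
  have hang0 : 0 < π / ((n:ℝ)+2) := by positivity
  have hang2 : π / ((n:ℝ)+2) ≤ π / 2 := by
    apply div_le_div_of_nonneg_left (le_of_lt Real.pi_pos) (by norm_num) (by linarith)
  have hcos0 : 0 ≤ cos (π / ((n:ℝ)+2)) :=
    Real.cos_nonneg_of_mem_Icc ⟨by linarith [Real.pi_pos], hang2⟩
  have hx0 : 0 ≤ x := le_trans (by positivity) (le_of_lt hax)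
  have hsx : Real.sqrt x < 2 := by
    rw [show (2:ℝ) = Real.sqrt 4 by rw [show (4:ℝ) = 2^2 by norm_num, Real.sqrt_sq (by norm_num)]]
    exact Real.sqrt_lt_sqrt hx0 hx4
  have hsx0 : 0 ≤ Real.sqrt x := Real.sqrt_nonneg x
  have h1 : Real.sqrt x / 2 ≤ 1 := by linarith
  have h1' : -1 ≤ Real.sqrt x / 2 := by linarith
  have hcx : cos (Real.arccos (Real.sqrt x / 2)) = Real.sqrt x / 2 := Real.cos_arccos h1' h1
  have hval : 4 * cos (Real.arccos (Real.sqrt x / 2)) ^ 2 = x := by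
    rw [hcx]
    have : (Real.sqrt x)^2 = x := Real.sq_sqrt hx0
    nlinarith [this]
  refine ⟨⟨?_, ?_⟩, hval⟩
  · rw [Real.arccos_pos]
    linarith [hsx]
  · -- arccos (√x/2) < π/(n+2)  since cos (arccos (√x/2)) > cos (π/(n+2))
    have hgt : cos (π / ((n:ℝ)+2)) < Real.sqrt x / 2 := by
      apply lt_of_pow_lt_pow_left₀ 2 (by positivity)
      have : (Real.sqrt x / 2)^2 = x / 4 := by
        rw [div_pow, Real.sq_sqrt hx0]; norm_num
      rw [this]
      nlinarith
    by_contra hcon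
    push_neg at hcon
    have hmem1 : π / ((n:ℝ)+2) ∈ Set.Icc 0 π := ⟨le_of_lt hang0, by
      calc π / ((n:ℝ)+2) ≤ π / 2 := hang2
        _ ≤ π := by linarith [Real.pi_pos]⟩
    have hmem2 : Real.arccos (Real.sqrt x / 2) ∈ Set.Icc 0 π :=
      ⟨Real.arccos_nonneg _, Real.arccos_le_pi _⟩
    rcases eq_or_lt_of_le hcon with heq | hlt
    · have : cos (π / ((n:ℝ)+2)) = Real.sqrt x / 2 := by rw [heq, hcx]
      linarith
    · have := Real.strictAntiOn_cos hmem1 hmem2 hlt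
      rw [hcx] at this
      linarith

lemma p_eq_F (n : ℕ) (θ : ℝ) (hs : sin θ ≠ 0) : p n (4 * cos θ ^ 2) = F n θ := by
  have h := p_trig n θ
  rw [F, eq_div_iff hs]
  exact h

lemma p_mono_low (n : ℕ) {x y : ℝ} (hax : 4 * cos (π / ((n:ℝ)+2)) ^ 2 < x)
    (hxy : x < y) (hy4 : y < 4) : p n x < p n y := by
  obtain ⟨hθx, hvx⟩ := theta_spec n hax (by linarith)
  obtain ⟨hθy, hvy⟩ := theta_spec n (by linarith) hy4
  have hsy : Real.sqrt x < Real.sqrt y := Real.sqrt_lt_sqrt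
    (le_trans (by positivity) (le_of_lt hax)) hxy
  -- θ_y < θ_x
  have hθorder : Real.arccos (Real.sqrt y / 2) < Real.arccos (Real.sqrt x / 2) := by
    by_contra hcon
    push_neg at hcon
    have hmem1 : Real.arccos (Real.sqrt x / 2) ∈ Set.Icc 0 π :=
      ⟨Real.arccos_nonneg _, Real.arccos_le_pi _⟩
    have hmem2 : Real.arccos (Real.sqrt y / 2) ∈ Set.Icc 0 π :=
      ⟨Real.arccos_nonneg _, Real.arccos_le_pi _⟩
    have hx0 : 0 ≤ x := le_trans (by positivity) (le_of_lt hax)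
    have hcx : cos (Real.arccos (Real.sqrt x / 2)) = Real.sqrt x / 2 := by
      apply Real.cos_arccos
      · linarith [Real.sqrt_nonneg x]
      · nlinarith [Real.sq_sqrt hx0, Real.sqrt_nonneg x, hxy, hy4]
    have hcy : cos (Real.arccos (Real.sqrt y / 2)) = Real.sqrt y / 2 := by
      apply Real.cos_arccos
      · linarith [Real.sqrt_nonneg y]
      · nlinarith [Real.sq_sqrt (show (0:ℝ) ≤ y by linarith [hx0]), Real.sqrt_nonneg y]
    rcases eq_or_lt_of_le hcon with heq | hlt
    · rw [heq] at hcx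
      rw [hcx] at hcy
      linarith
    · have := Real.strictAntiOn_cos hmem1 hmem2 hlt
      rw [hcx, hcy] at this
      linarith
  have hsinx : sin (Real.arccos (Real.sqrt x / 2)) ≠ 0 := by
    apply ne_of_gt
    apply Real.sin_pos_of_pos_of_lt_pi hθx.1
    calc Real.arccos (Real.sqrt x / 2) < π/((n:ℝ)+2) := hθx.2
      _ ≤ π / 2 := by
          apply div_le_div_of_nonneg_left (le_of_lt Real.pi_pos) (by norm_num)
          have : (0:ℝ) ≤ (n:ℝ) := Nat.cast_nonneg n
          linarith
      _ < π := by linarith [Real.pi_pos]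
  have hsiny : sin (Real.arccos (Real.sqrt y / 2)) ≠ 0 := by
    apply ne_of_gt
    apply Real.sin_pos_of_pos_of_lt_pi hθy.1
    calc Real.arccos (Real.sqrt y / 2) < π/((n:ℝ)+2) := hθy.2
      _ ≤ π / 2 := by
          apply div_le_div_of_nonneg_left (le_of_lt Real.pi_pos) (by norm_num)
          have : (0:ℝ) ≤ (n:ℝ) := Nat.cast_nonneg n
          linarith
      _ < π := by linarith [Real.pi_pos]
  have ex : p n x = F n (Real.arccos (Real.sqrt x / 2)) := by
    have h := p_eq_F n _ hsinx
    rw [hvx] at h; exact h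
  have ey : p n y = F n (Real.arccos (Real.sqrt y / 2)) := by
    have h := p_eq_F n _ hsiny
    rw [hvy] at h; exact h
  rw [ex, ey]
  exact F_anti n hθy hθx hθorder

lemma p_lt_p4 (n : ℕ) {x : ℝ} (hax : 4 * cos (π / ((n:ℝ)+2)) ^ 2 < x) (hx4 : x < 4) :
    p n x < p n 4 := by
  set x' := (x + 4) / 2 with hx'
  have hx'1 : x < x' := by rw [hx']; linarith
  have hx'2 : x' < 4 := by rw [hx']; linarith
  have step1 : p n x < p n x' := p_mono_low n hax hx'1 hx'2
  have step2 : p n x' ≤ p n 4 := by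
    have htend : Filter.Tendsto (p n) (nhdsWithin 4 (Set.Iio 4)) (nhds (p n 4)) :=
      ((p_cont n).continuousAt).continuousWithinAt
    apply ge_of_tendsto htend
    have hmem : Set.Ioo x' 4 ∈ nhdsWithin (4:ℝ) (Set.Iio 4) :=
      Ioo_mem_nhdsLT_of_mem ⟨hx'2, le_refl _⟩
    filter_upwards [hmem] with t ht
    exact le_of_lt (p_mono_low n (by linarith) ht.1 ht.2)
  linarith

lemma p_strictMonoOn (n : ℕ) {x y : ℝ} (hax : 4 * cos (π / ((n:ℝ)+2)) ^ 2 < x)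
    (hxy : x < y) : p n x < p n y := by
  rcases lt_trichotomy y 4 with hy | hy | hy
  · exact p_mono_low n hax hxy hy
  · rw [hy]; exact p_lt_p4 n hax (hy ▸ hxy)
  · rcases lt_trichotomy x 4 with hx | hx | hx
    · have h1 : p n x < p n 4 := p_lt_p4 n hax hx
      have h2 : 0 < p n y - p n 4 := (p_high n 4 y (le_refl _) hy).2.2.1
      linarith
    · have h2 : 0 < p n y - p n x := (p_high n x y (le_of_eq hx.symm) hxy).2.2.1
      linarith
    · have h2 : 0 < p n y - p n x := (p_high n x y (le_of_lt hx) hxy).2.2.1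
      linarith

theorem stmt_16 (n : ℕ) (ρ : ℝ) (hρ : 1 ≤ ρ)
    (h : ∃ a : ℝ, a > 4 * Real.cos (Real.pi / ((n : ℝ) + 2)) ^ 2 ∧ p n a = ρ) :
    ∃! a : ℝ, a > 4 * Real.cos (Real.pi / ((n : ℝ) + 2)) ^ 2 ∧ p n a = ρ := by
  obtain ⟨a, ha, hpa⟩ := h
  refine ⟨a, ⟨ha, hpa⟩, ?_⟩
  rintro b ⟨hb, hpb⟩
  rcases lt_trichotomy b a with hlt | heq | hgt
  · exfalso
    have := p_strictMonoOn n hb hlt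
    rw [hpa, hpb] at this
    exact lt_irrefl _ this
  · exact heq
  · exfalso
    have := p_strictMonoOn n ha hgt
    rw [hpa, hpb] at this
    exact lt_irrefl _ this
end

section
/- For real a_0 with a_0 ≥ 4cos²(π/(n+3)) for some n ≥ 1, and a_i := p_i(a_0) for 0 ≤ i ≤ n, the sequence satisfies, for all 0 ≤ i ≤ n−2: 1 + 2·(Σ_{k=0}^{i+1} a_k)/a_i = 2a_0 + 1, i.e., a_{i+1} = a_0·a_i − Σ_{k=0}^{i} a_k. -/
open Real Finset

lemma p_closed (θ : ℝ) : ∀ i : ℕ, p i (4 * Real.cos θ ^ 2) * Real.sin θ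
    = (2 * Real.cos θ) ^ (i + 1) * Real.sin (((i : ℝ) + 2) * θ) := by
  intro i
  induction i using Nat.twoStepInduction with
  | zero =>
      simp only [p]
      push_cast
      rw [show ((0:ℝ) + 2) * θ = θ + θ by ring, Real.sin_add]
      ring
  | one =>
      simp only [p]
      have h1 : Real.sin θ ^ 2 + Real.cos θ ^ 2 = 1 := Real.sin_sq_add_cos_sq θ
      push_cast
      rw [show ((1:ℝ) + 2) * θ = 3 * θ by ring, Real.sin_three_mul]
      linear_combination 16 * Real.cos θ ^ 2 * Real.sin θ * h1
  | more k ih1 ih2 =>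
      have e1 : p k (4 * Real.cos θ ^ 2) * Real.sin θ
          = (2 * Real.cos θ) ^ (k + 1) * Real.sin (((k : ℝ) + 2) * θ) := ih1
      have e2 : p (k+1) (4 * Real.cos θ ^ 2) * Real.sin θ
          = (2 * Real.cos θ) ^ (k + 2) * Real.sin (((k : ℝ) + 3) * θ) := by
        rw [ih2]; push_cast; ring_nf
      have hs1 : Real.sin (((k : ℝ) + 4) * θ)
          = Real.sin (((k : ℝ) + 3) * θ) * Real.cos θ + Real.cos (((k : ℝ) + 3) * θ) * Real.sin θ := by
        rw [show ((k : ℝ) + 4) * θ = ((k : ℝ) + 3) * θ + θ by ring, Real.sin_add]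
      have hs2 : Real.sin (((k : ℝ) + 2) * θ)
          = Real.sin (((k : ℝ) + 3) * θ) * Real.cos θ - Real.cos (((k : ℝ) + 3) * θ) * Real.sin θ := by
        rw [show ((k : ℝ) + 2) * θ = ((k : ℝ) + 3) * θ - θ by ring, Real.sin_sub]
      push_cast
      show (4 * Real.cos θ ^ 2 * (p (k+1) (4 * Real.cos θ ^ 2) - p k (4 * Real.cos θ ^ 2)))
          * Real.sin θ = (2 * Real.cos θ) ^ (k + 2 + 1) * Real.sin (((k : ℝ) + 2 + 2) * θ)
      have lhs_eq : (4 * Real.cos θ ^ 2 * (p (k+1) (4 * Real.cos θ ^ 2) - p k (4 * Real.cos θ ^ 2)))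
          * Real.sin θ
          = 4 * Real.cos θ ^ 2 * ((2 * Real.cos θ) ^ (k + 2) * Real.sin (((k : ℝ) + 3) * θ)
            - (2 * Real.cos θ) ^ (k + 1) * Real.sin (((k : ℝ) + 2) * θ)) := by
        rw [← e1, ← e2]; ring
      rw [lhs_eq, show ((k : ℝ) + 2 + 2) * θ = ((k : ℝ) + 4) * θ by ring, hs1, hs2]
      ring

lemma p_rec (x : ℝ) : ∀ i : ℕ, p (i+1) x = x * p i x - ∑ k ∈ Finset.range (i+1), p k x := by
  intro i
  induction i with
  | zero => simp [p]; ring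
  | succ k ih =>
      rw [Finset.sum_range_succ]
      show x * (p (k+1) x - p k x) = _
      rw [ih]
      ring

lemma p_pos_ge4 (x : ℝ) (hx : 4 ≤ x) : ∀ i : ℕ, 0 < p i x ∧ 2 * p i x ≤ p (i+1) x := by
  intro i
  induction i with
  | zero =>
      refine ⟨by show (0:ℝ) < x; linarith, ?_⟩
      show 2 * x ≤ x * (x - 1); nlinarith
  | succ k ih =>
      obtain ⟨h1, h2⟩ := ih
      refine ⟨by linarith, ?_⟩
      show 2 * p (k+1) x ≤ x * (p (k+1) x - p k x)
      nlinarith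

lemma p_pos (n : ℕ) (x : ℝ) (hx : x ≥ 4 * Real.cos (Real.pi / ((n : ℝ) + 3)) ^ 2) :
    ∀ i : ℕ, i ≤ n → 0 < p i x := by
  intro i hi
  rcases le_or_gt 4 x with h4 | h4
  · exact (p_pos_ge4 x h4 i).1
  · set θ₀ := Real.pi / ((n : ℝ) + 3) with hθ₀
    have hn3 : (0:ℝ) < (n : ℝ) + 3 := by positivity
    have hθ₀pos : 0 < θ₀ := div_pos Real.pi_pos hn3
    have hθ₀le : θ₀ ≤ Real.pi / 3 := by
      rw [hθ₀]
      gcongr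
      all_goals
        first
        | exact Real.pi_pos.le
        | linarith [Nat.cast_nonneg (α := ℝ) n]
    have hcosθ₀pos : 0 < Real.cos θ₀ := by
      apply Real.cos_pos_of_mem_Ioo
      constructor
      · linarith [Real.pi_pos]
      · linarith [Real.pi_pos]
    have hxpos : 0 < x := by nlinarith
    set θ := Real.arccos (Real.sqrt x / 2) with hθ
    have hsx_lt : Real.sqrt x < 2 := by
      have : Real.sqrt x < Real.sqrt 4 := Real.sqrt_lt_sqrt hxpos.le h4
      rwa [show (4:ℝ) = 2 ^ 2 by norm_num, Real.sqrt_sq (by norm_num : (0:ℝ) ≤ 2)] at this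
    have hsx_nonneg : 0 ≤ Real.sqrt x := Real.sqrt_nonneg x
    have hmem1 : -1 ≤ Real.sqrt x / 2 := by linarith
    have hmem2 : Real.sqrt x / 2 ≤ 1 := by linarith
    have hcosθ : Real.cos θ = Real.sqrt x / 2 := Real.cos_arccos hmem1 hmem2
    have hx_eq : 4 * Real.cos θ ^ 2 = x := by
      rw [hcosθ]
      rw [div_pow, Real.sq_sqrt hxpos.le]
      ring
    have hge : Real.cos θ₀ ≤ Real.sqrt x / 2 := by
      have h1 : Real.sqrt (4 * Real.cos θ₀ ^ 2) ≤ Real.sqrt x := Real.sqrt_le_sqrt hx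
      have h2 : Real.sqrt (4 * Real.cos θ₀ ^ 2) = 2 * Real.cos θ₀ := by
        rw [show 4 * Real.cos θ₀ ^ 2 = (2 * Real.cos θ₀) ^ 2 by ring,
          Real.sqrt_sq (by linarith)]
      rw [h2] at h1
      linarith
    have hθle : θ ≤ θ₀ := by
      by_contra hcon
      push_neg at hcon
      have hθmemIcc : θ ∈ Set.Icc 0 Real.pi :=
        ⟨Real.arccos_nonneg _, Real.arccos_le_pi _⟩
      have hθ₀mem : θ₀ ∈ Set.Icc 0 Real.pi := ⟨hθ₀pos.le, by linarith [Real.pi_pos]⟩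
      have := Real.strictAntiOn_cos hθ₀mem hθmemIcc hcon
      rw [hcosθ] at this
      linarith
    have hθpos : 0 < θ := Real.arccos_pos.mpr (by linarith)
    have hsinθpos : 0 < Real.sin θ :=
      Real.sin_pos_of_pos_of_lt_pi hθpos (by linarith [Real.pi_pos])
    have hcosθpos : 0 < Real.cos θ := by
      rw [hcosθ]; positivity
    have hlt : ((i : ℝ) + 2) * θ < Real.pi := by
      have h1 : ((i : ℝ) + 2) * θ ≤ ((n : ℝ) + 2) * θ₀ := by
        have : (i : ℝ) ≤ (n : ℝ) := Nat.cast_le.mpr hi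
        nlinarith
      have h2 : ((n : ℝ) + 2) * θ₀ < Real.pi := by
        rw [hθ₀, mul_div_assoc', div_lt_iff₀ hn3]
        nlinarith [Real.pi_pos]
      linarith
    have hsin2 : 0 < Real.sin (((i : ℝ) + 2) * θ) := by
      apply Real.sin_pos_of_pos_of_lt_pi _ hlt
      positivity
    have hclosed := p_closed θ i
    rw [hx_eq] at hclosed
    have hprod : 0 < p i x * Real.sin θ := by
      rw [hclosed]
      exact mul_pos (pow_pos (by linarith) _) hsin2
    rcases mul_pos_iff.mp hprod with ⟨h, _⟩ | ⟨_, h⟩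
    · exact h
    · linarith

theorem stmt_18 (n : ℕ) (hn : 1 ≤ n) (a₀ : ℝ)
    (ha : a₀ ≥ 4 * Real.cos (Real.pi / ((n : ℝ) + 3)) ^ 2)
    (a : ℕ → ℝ) (hdef : ∀ i, i ≤ n → a i = p i a₀) :
    ∀ i : ℕ, i ≤ n - 2 →
      (1 + 2 * (∑ k ∈ Finset.range (i + 2), a k) / a i = 2 * a₀ + 1 ∧
       a (i + 1) = a₀ * a i - ∑ k ∈ Finset.range (i + 1), a k) := by
  intro i hi
  have hi1 : i + 1 ≤ n := by omega
  have hk : ∀ k, k ≤ i + 1 → a k = p k a₀ := fun k hk => hdef k (le_trans hk hi1)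
  have hsum1 : ∑ k ∈ Finset.range (i + 1), a k = ∑ k ∈ Finset.range (i + 1), p k a₀ :=
    Finset.sum_congr rfl fun k hkm => hk k (Finset.mem_range.mp hkm).le
  have h2 : a (i + 1) = a₀ * a i - ∑ k ∈ Finset.range (i + 1), a k := by
    rw [hk (i+1) le_rfl, hk i (by omega), hsum1, p_rec]
  have hpos : 0 < p i a₀ := p_pos n a₀ ha i (by omega)
  have hai : a i = p i a₀ := hk i (by omega)
  have hne : a i ≠ 0 := by rw [hai]; exact ne_of_gt hpos
  refine ⟨?_, h2⟩
  have hsum2 : ∑ k ∈ Finset.range (i + 2), a k = a₀ * a i := by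
    rw [Finset.sum_range_succ, h2]; ring
  rw [hsum2]
  field_simp
  ring
end

section
/- For m ≥ 2 an integer, the function g(n) = 2(1 − π²/(2(n+3)²))^{n+1} satisfies g(n) ≥ 1 for all integers n ≥ 2. -/
open Real

theorem stmt_19 (n : ℕ) (hn : 2 ≤ n) :
    2 * (1 - Real.pi ^ 2 / (2 * ((n : ℝ) + 3) ^ 2)) ^ (n + 1) ≥ 1 := by
  have hπ2 : Real.pi ^ 2 < 9.8697 := by
    nlinarith [Real.pi_lt_d6, Real.pi_pos]
  have hπ2' : (0:ℝ) < Real.pi ^ 2 := by positivity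
  rcases lt_or_ge n 5 with h5 | h5
  · interval_cases n
    · norm_num
      nlinarith [hπ2, hπ2', sq_nonneg (Real.pi ^ 2 - 9.8697), sq_nonneg (Real.pi ^ 2)]
    · norm_num
      nlinarith [hπ2, hπ2', sq_nonneg (Real.pi ^ 2 - 9.8697), sq_nonneg (Real.pi ^ 2),
        sq_nonneg (Real.pi ^ 2 * (Real.pi ^ 2 - 9.8697))]
    · norm_num
      nlinarith [hπ2, hπ2', sq_nonneg (Real.pi ^ 2 - 9.8697), sq_nonneg (Real.pi ^ 2),
        sq_nonneg (Real.pi ^ 2 * (Real.pi ^ 2 - 9.8697)), sq_nonneg (Real.pi ^ 2 * Real.pi ^ 2)]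
  · have hN5 : (5:ℝ) ≤ (n:ℝ) := by exact_mod_cast h5
    set N : ℝ := (n : ℝ) with hN
    have hden : (0:ℝ) < 2 * (N + 3) ^ 2 := by positivity
    set x : ℝ := Real.pi ^ 2 / (2 * (N + 3) ^ 2) with hx
    have hxpos : 0 < x := by positivity
    have key : (N + 1) * x ≤ 1 / 2 := by
      rw [hx, mul_div_assoc', div_le_div_iff₀ hden (by norm_num : (0:ℝ) < 2)]
      nlinarith [hπ2, hN5, hπ2', mul_nonneg (sub_nonneg.2 hN5) (le_of_lt hπ2')]
    have hx1 : x ≤ 1 := by nlinarith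
    have hb := one_add_mul_le_pow (a := -x) (by nlinarith) (n + 1)
    have hcast : ((n + 1 : ℕ) : ℝ) = N + 1 := by rw [hN]; push_cast; ring
    rw [hcast] at hb
    have h2 : (1:ℝ) + (N + 1) * (-x) ≤ (1 - x) ^ (n + 1) := by
      simpa [sub_eq_add_neg] using hb
    nlinarith [h2, key]
end
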